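/- arXiv:1611.02868 — 4 statements merged into one kernel-verified Lean document; each statement's English description precedes it below -/
import Mathlib

section
/- There exists a unique additive group endomorphism j of G such that j(a) = a for every a ∈ A and j(b) = (1 − m) • b (integer scalar multiplication) for every b ∈ B. -/
/-- Let `G` be an additive commutative group, `A` and `B` subgroups of `G`
with `A + B = G` (every element of `G` is a sum of an element of `A` and an element of `B`),
and let `m ≥ 1` be an integer with `m • x = 0` for every `x ∈ A ∩ B`.  Then there exists a
unique additive group endomorphism `j` of `G` with `j a = a` for `a ∈ A` and
`j b = (1 - m) • b` for `b ∈ B`. -/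
theorem stmt_0 {G : Type*} [AddCommGroup G] (A B : AddSubgroup G)
    (hsum : ∀ g : G, ∃ a ∈ A, ∃ b ∈ B, g = a + b)
    (m : ℕ) (hm : 1 ≤ m)
    (htor : ∀ x ∈ A ⊓ B, m • x = 0) :
    ∃! j : G →+ G,
      (∀ a ∈ A, j a = a) ∧ (∀ b ∈ B, j b = (1 - (m : ℤ)) • b) := by
  -- key well-definedness lemma
  have key : ∀ a ∈ A, ∀ b ∈ B, ∀ a' ∈ A, ∀ b' ∈ B,
      a + b = a' + b' → m • b = m • b' := by
    intro a ha b hb a' ha' b' hb' h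
    have hmem : b - b' ∈ A ⊓ B := by
      constructor
      · have : b - b' = a' - a := by
          rw [sub_eq_sub_iff_add_eq_add, add_comm]; exact h
        rw [this]; exact A.sub_mem ha' ha
      · exact B.sub_mem hb hb'
    have h0 := htor _ hmem
    rw [smul_sub, sub_eq_zero] at h0
    exact h0
  -- choose decomposition
  choose a ha b hb hab using hsum
  set f : G → G := fun g => g - m • b g with hf
  have hfval : ∀ g : G, ∀ x ∈ A, ∀ y ∈ B, g = x + y → f g = g - m • y := by
    intro g x hx y hy h
    have := key _ hx _ hy _ (ha g) _ (hb g) (h ▸ (hab g))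
    simp only [hf, ← this]
  have fadd : ∀ g₁ g₂ : G, f (g₁ + g₂) = f g₁ + f g₂ := by
    intro g₁ g₂
    have h1 := hab g₁
    have h2 := hab g₂
    have hdec : g₁ + g₂ = (a g₁ + a g₂) + (b g₁ + b g₂) := by
      conv_lhs => rw [h1, h2]
      abel
    rw [hfval _ _ (A.add_mem (ha g₁) (ha g₂)) _ (B.add_mem (hb g₁) (hb g₂)) hdec]
    simp only [hf, smul_add]
    abel
  refine ⟨AddMonoidHom.mk' f fadd, ⟨?_, ?_⟩, ?_⟩
  · intro x hx
    have : f x = x - m • (0 : G) :=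
      hfval x x hx 0 B.zero_mem (by simp)
    simpa using this
  · intro y hy
    have : f y = y - m • y :=
      hfval y 0 A.zero_mem y hy (by simp)
    simp only [AddMonoidHom.mk'_apply, this, sub_smul, one_smul, natCast_zsmul]
  · intro j ⟨hjA, hjB⟩
    ext g
    have hg := hab g
    rw [hg, map_add, AddMonoidHom.mk'_apply, fadd,
      hjA _ (ha g), hjB _ (hb g)]
    have e1 : f (a g) = a g := by
      have := hfval (a g) (a g) (ha g) 0 B.zero_mem (by simp); simpa using this
    have e2 : f (b g) = b g - m • b g := hfval (b g) 0 A.zero_mem (b g) (hb g) (by simp)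
    rw [e1, e2, sub_smul, one_smul, natCast_zsmul]
end

section
/- The kernel of id − j equals the set of elements a + b with a ∈ A, b ∈ B and m • b = 0, and the kernel of j + (m − 1)·id equals the set of elements a + b with a ∈ A, m • a = 0 and b ∈ B. -/
/-- With `G`, `A`, `B`, `m` and `j` as in the context, the kernel of
`id - j` equals `{a + b | a ∈ A, b ∈ B, m • b = 0}`, and the kernel of `j + (m-1)·id`
equals `{a + b | a ∈ A, m • a = 0, b ∈ B}`. -/
theorem stmt_2 {G : Type*} [AddCommGroup G] (A B : AddSubgroup G)
    (hsum : ∀ g : G, ∃ a ∈ A, ∃ b ∈ B, g = a + b)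
    (m : ℕ) (hm : 1 ≤ m)
    (j : G →+ G)
    (hjA : ∀ a ∈ A, j a = a)
    (hjB : ∀ b ∈ B, j b = (1 - (m : ℤ)) • b) :
    (∀ x : G, x ∈ (AddMonoidHom.id G - j).ker ↔
      ∃ a ∈ A, ∃ b ∈ B, m • b = 0 ∧ x = a + b) ∧
    (∀ x : G, x ∈ (j + ((m : ℤ) - 1) • AddMonoidHom.id G).ker ↔
      ∃ a ∈ A, m • a = 0 ∧ ∃ b ∈ B, x = a + b) := by
  have smB : ∀ b : G, (1 - (m : ℤ)) • b = b - (m : ℤ) • b := by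
    intro b; rw [sub_smul, one_smul]
  constructor
  · intro x
    simp only [AddMonoidHom.mem_ker, AddMonoidHom.sub_apply, AddMonoidHom.id_apply]
    constructor
    · intro hx
      obtain ⟨a, ha, b, hb, rfl⟩ := hsum x
      refine ⟨a, ha, b, hb, ?_, rfl⟩
      have : a + b - j (a + b) = (m : ℤ) • b := by
        rw [map_add, hjA a ha, hjB b hb, smB]; abel
      have h0 : (m : ℤ) • b = 0 := by rw [← this, hx]
      simpa [natCast_zsmul] using h0
    · rintro ⟨a, ha, b, hb, hmb, rfl⟩
      have hmb' : (m : ℤ) • b = 0 := by rw [natCast_zsmul]; exact_mod_cast hmb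
      rw [map_add, hjA a ha, hjB b hb, smB, hmb']; abel
  · intro x
    simp only [AddMonoidHom.mem_ker, AddMonoidHom.add_apply, AddMonoidHom.smul_apply,
      AddMonoidHom.id_apply]
    constructor
    · intro hx
      obtain ⟨a, ha, b, hb, rfl⟩ := hsum x
      refine ⟨a, ha, ?_, b, hb, rfl⟩
      have : j (a + b) + ((m : ℤ) - 1) • (a + b) = (m : ℤ) • a := by
        rw [map_add, hjA a ha, hjB b hb, smB, sub_smul, one_smul, smul_add]; abel
      have h0 : (m : ℤ) • a = 0 := by rw [← this, hx]
      simpa [natCast_zsmul] using h0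
    · rintro ⟨a, ha, hma, b, hb, rfl⟩
      have hma' : (m : ℤ) • a = 0 := by rw [natCast_zsmul]; exact_mod_cast hma
      rw [map_add, hjA a ha, hjB b hb, smB, sub_smul, one_smul, smul_add, hma']; abel
end

section
/- The image of the endomorphism j + (m − 1)·id equals A, and the image of the endomorphism id − j equals B. -/
/-- With `G`, `A`, `B`, `m` and `j` as in the context, and assuming
moreover that `A` and `B` are `m`-divisible, the image of `j + (m-1)·id` equals `A`
and the image of `id - j` equals `B`. -/
theorem stmt_3 {G : Type*} [AddCommGroup G] (A B : AddSubgroup G)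
    (hsum : ∀ g : G, ∃ a ∈ A, ∃ b ∈ B, g = a + b)
    (m : ℕ) (hm : 1 ≤ m)
    (j : G →+ G)
    (hjA : ∀ a ∈ A, j a = a)
    (hjB : ∀ b ∈ B, j b = (1 - (m : ℤ)) • b)
    (hdivA : ∀ a ∈ A, ∃ a' ∈ A, m • a' = a)
    (hdivB : ∀ b ∈ B, ∃ b' ∈ B, m • b' = b) :
    (j + ((m : ℤ) - 1) • AddMonoidHom.id G).range = A ∧
    (AddMonoidHom.id G - j).range = B := by
  constructor
  · ext g
    constructor
    · rintro ⟨x, rfl⟩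
      obtain ⟨a, ha, b, hb, rfl⟩ := hsum x
      have : (j + ((m : ℤ) - 1) • AddMonoidHom.id G) (a + b) = (m : ℤ) • a := by
        simp only [AddMonoidHom.add_apply, AddMonoidHom.smul_apply, AddMonoidHom.id_apply,
          map_add, hjA a ha, hjB b hb, smul_add]
        module
      rw [this]
      exact A.zsmul_mem ha _
    · intro hg
      obtain ⟨a', ha', hma⟩ := hdivA g hg
      refine ⟨a', ?_⟩
      simp only [AddMonoidHom.add_apply, AddMonoidHom.smul_apply, AddMonoidHom.id_apply,
        hjA a' ha']
      rw [sub_smul, one_smul, ← hma, natCast_zsmul]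
      abel
  · ext g
    constructor
    · rintro ⟨x, rfl⟩
      obtain ⟨a, ha, b, hb, rfl⟩ := hsum x
      have : (AddMonoidHom.id G - j) (a + b) = (m : ℤ) • b := by
        simp only [AddMonoidHom.sub_apply, AddMonoidHom.id_apply, map_add,
          hjA a ha, hjB b hb]
        rw [sub_smul, one_smul]
        abel
      rw [this]
      exact B.zsmul_mem hb _
    · intro hg
      obtain ⟨b', hb', hmb⟩ := hdivB g hg
      refine ⟨b', ?_⟩
      simp only [AddMonoidHom.sub_apply, AddMonoidHom.id_apply, hjB b' hb']
      rw [sub_smul, one_smul, ← hmb, natCast_zsmul]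
      abel
end

section
/- Every element of the kernel of f is annihilated by m (i.e. ker f is contained in the m-torsion subgroup B[m] = {b ∈ B : m • b = 0}), the image under f of B[m] equals the kernel of g, and the kernel of the restriction of f to B[m] equals ker f; in other words, there is a short exact sequence 0 → ker f → B[m] → ker g → 0. -/
/-- Let `B`, `B'` be additive commutative groups, `m ≥ 1`,
`f : B → B'` a surjective additive homomorphism and `g : B' → B` an additive homomorphism
with `g ∘ f = [m]`.  Then `ker f ⊆ B[m]`, `f(B[m]) = ker g`, and the kernel of the
restriction of `f` to `B[m]` equals `ker f`; i.e. `0 → ker f → B[m] → ker g → 0` is exact. -/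
theorem stmt_5 {B B' : Type*} [AddCommGroup B] [AddCommGroup B']
    (m : ℕ) (hm : 1 ≤ m)
    (f : B →+ B') (hf : Function.Surjective f)
    (g : B' →+ B) (hgf : ∀ b : B, g (f b) = m • b) :
    (∀ b ∈ f.ker, m • b = 0) ∧
    (f '' {b : B | m • b = 0} = {b' : B' | g b' = 0}) ∧
    ({b : B | m • b = 0 ∧ f b = 0} = {b : B | f b = 0}) := by
  refine ⟨fun b hb => ?_, ?_, ?_⟩
  · rw [← hgf b, AddMonoidHom.mem_ker.mp hb, map_zero]
  · ext b'
    constructor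
    · rintro ⟨b, hb, rfl⟩
      simpa [hgf b] using hb
    · intro hb'
      obtain ⟨b, rfl⟩ := hf b'
      exact ⟨b, by simpa [hgf b] using hb', rfl⟩
  · ext b
    simp only [Set.mem_setOf_eq, and_iff_right_iff_imp]
    intro hb
    rw [← hgf b, hb, map_zero]
end
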